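/- Let V be a k × t Vandermonde matrix over 𝔽_q built from t distinct elements with k < t, and let M ⊆ {1,…,t} with |M| ≥ k. Let C_M be the (t - |M|) × t matrix whose rows are the standard basis vectors e_j for j ∉ M. Then the stacked matrix [V; C_M] has full row rank k + t - |M|, and consequently its right null space has dimension |M| - k. -/

import Mathlib

open Matrix

/-- The stacked matrix `[V; C_M]`: the Vandermonde rows `α_j ^ i`
(`0 ≤ i ≤ k-1`) on top of the standard basis rows `e_j` for `j ∉ M`. -/
def stackedMat {F : Type*} [Field F] (k t : ℕ) (α : Fin t → F)
    (M : Finset (Fin t)) :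
    Matrix (Fin k ⊕ {j : Fin t // j ∉ M}) (Fin t) F :=
  Matrix.of (Sum.elim (fun i j => α j ^ (i : ℕ))
    (fun r j => if j = r.1 then 1 else 0))

/-- If `|M| ≥ k`, the stacked matrix `[V; C_M]` has full row
rank `k + t - |M|`, hence its right null space has dimension `|M| - k`. -/
theorem stacked_full_row_rank {F : Type*} [Field F] [Fintype F]
    (k t : ℕ) (hkt : k < t) (α : Fin t → F) (hα : Function.Injective α)
    (M : Finset (Fin t)) (hM : k ≤ M.card) :
    (stackedMat k t α M).rank = k + (t - M.card) ∧
      Module.finrank F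
        ↥(LinearMap.ker (stackedMat k t α M).mulVecLin) = M.card - k := by
  classical
  have hMt : M.card ≤ t := by simpa using M.card_le_univ
  have hcard : Fintype.card {j : Fin t // j ∉ M} = t - M.card := by
    simp [Fintype.card_subtype_compl]
  have hli : LinearIndependent F (stackedMat k t α M).row := by
    rw [Fintype.linearIndependent_iff]
    intro g hg
    have hcol : ∀ j : Fin t,
        (∑ i : Fin k, g (Sum.inl i) * α j ^ (i : ℕ)) +
        (∑ r : {j : Fin t // j ∉ M}, g (Sum.inr r) * if j = r.1 then 1 else 0) = 0 := by
      intro j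
      have := congrFun hg j
      simpa [stackedMat, Matrix.row_apply, Finset.sum_apply, Fintype.sum_sum_type] using this
    set p : Polynomial F :=
      ∑ i : Fin k, Polynomial.C (g (Sum.inl i)) * Polynomial.X ^ (i : ℕ) with hp
    have hpeval : ∀ j ∈ M, p.eval (α j) = 0 := by
      intro j hj
      have h0 : (∑ r : {j : Fin t // j ∉ M},
          g (Sum.inr r) * if j = r.1 then 1 else 0) = 0 := by
        apply Finset.sum_eq_zero
        intro r _
        have hne : j ≠ r.1 := by rintro rfl; exact r.2 hj
        simp [hne]
      have h := hcol j
      rw [h0, add_zero] at h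
      simpa [hp, Polynomial.eval_finset_sum] using h
    have hp0 : p = 0 := by
      rcases Nat.eq_zero_or_pos k with hk | hk
      · subst hk; simp [hp]
      · refine Polynomial.eq_zero_of_natDegree_lt_card_of_eval_eq_zero p
          (f := fun j : {x // x ∈ M} => α j.1)
          (fun a b hab => Subtype.ext (hα hab)) (fun j => hpeval j.1 j.2) ?_
        have hdeg : p.natDegree ≤ k - 1 := by
          refine Polynomial.natDegree_sum_le_of_forall_le _ _ (fun i _ => ?_)
          calc (Polynomial.C (g (Sum.inl i)) * Polynomial.X ^ (i : ℕ)).natDegree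
              ≤ (i : ℕ) := by
                exact (Polynomial.natDegree_C_mul_le _ _).trans
                  (le_of_eq (Polynomial.natDegree_X_pow _))
            _ ≤ k - 1 := by omega
        have : Fintype.card {x // x ∈ M} = M.card := Fintype.card_coe M
        omega
    have hinl : ∀ i : Fin k, g (Sum.inl i) = 0 := by
      intro i
      have h : p.coeff (i : ℕ) = g (Sum.inl i) := by
        rw [hp, Polynomial.finset_sum_coeff]
        rw [Finset.sum_eq_single i]
        · simp
        · intro b _ hb
          have : (i : ℕ) ≠ (b : ℕ) := fun h => hb (Fin.ext h.symm)
          simp [Polynomial.coeff_X_pow, this]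
        · simp
      rw [hp0] at h
      simpa using h.symm
    intro i
    match i with
    | Sum.inl i => exact hinl i
    | Sum.inr r =>
      have h := hcol r.1
      have h1 : (∑ i : Fin k, g (Sum.inl i) * α r.1 ^ (i : ℕ)) = 0 := by
        apply Finset.sum_eq_zero; intro i _; rw [hinl i, zero_mul]
      rw [h1, zero_add] at h
      rw [Finset.sum_eq_single r] at h
      · simpa using h
      · intro b _ hb
        have : r.1 ≠ b.1 := fun hh => hb (Subtype.ext hh.symm)
        simp [this]
      · simp
  have h1 : (stackedMat k t α M).rank = k + (t - M.card) := by
    rw [Matrix.rank_eq_finrank_span_row, finrank_span_eq_card hli,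
      Fintype.card_sum, Fintype.card_fin, hcard]
  refine ⟨h1, ?_⟩
  have h2 := LinearMap.finrank_range_add_finrank_ker (stackedMat k t α M).mulVecLin
  rw [Module.finrank_pi] at h2
  have h3 : Module.finrank F (LinearMap.range (stackedMat k t α M).mulVecLin)
      = k + (t - M.card) := h1
  rw [Fintype.card_fin] at h2
  omega
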